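/- arXiv:1111.0515 — 2 statements merged into one kernel-verified Lean document; each statement's English description precedes it below -/
import Mathlib

section
/- Let q be a complex number which is neither 0 nor a root of unity, and let λ, x be complex numbers avoiding the singularities below. Define ψ₂(λ) = (q^{1+λ} - q^{-1-λ})/(q^{1-λ} - q^{λ-1}) and ψ(λ, x) = q^{(λ+1)x} + ψ₂(λ)·q^{(λ-1)x}. Define the difference operator D acting on functions of x by (Df)(x) = [(1 - q^{-2} q^{2x})/(q^{-1}(1 - q^{2x}))]·f(x+1) + [(1 - q^{-2} q^{-2x})/(q^{-1}(1 - q^{-2x}))]·f(x-1). Then D applied to ψ(λ, ·) at x equals (q^{λ} + q^{-λ})·ψ(λ, x), whenever q^{2x} ≠ 1 and q^{2λ-2} ≠ 1. -/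
/-- The rank-one Macdonald eigenvalue equation (case b, `R = A₁`, `m = 1`, `t = q⁻²`):
the operator
`(Df)(x) = [(1 - q⁻²q^{2x})/(q⁻¹(1 - q^{2x}))]·f(x+1) + [(1 - q⁻²q^{-2x})/(q⁻¹(1 - q^{-2x}))]·f(x-1)`
applied to the Baker–Akhiezer function `ψ(λ,·)` gives `(q^λ + q^{-λ})·ψ(λ,x)`.
Here `q^z = exp(z·log q)`. -/
theorem rank_one_macdonald_eigenvalue (q : ℂ) (hq : q ≠ 0)
    (hroot : ∀ n : ℕ, 0 < n → q ^ n ≠ 1) (lam x : ℂ)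
    (hx : Complex.exp (2 * x * Complex.log q) ≠ 1)
    (hlam : Complex.exp ((2 * lam - 2) * Complex.log q) ≠ 1) :
    (fun Q : ℂ → ℂ => (fun ψ : ℂ → ℂ → ℂ =>
      (1 - Q (-2) * Q (2 * x)) / (Q (-1) * (1 - Q (2 * x))) * ψ lam (x + 1) +
        (1 - Q (-2) * Q (-2 * x)) / (Q (-1) * (1 - Q (-2 * x))) * ψ lam (x - 1) =
      (Q lam + Q (-lam)) * ψ lam x)
      (fun l z => Q ((l + 1) * z) +
        ((Q (1 + l) - Q (-1 - l)) / (Q (1 - l) - Q (l - 1))) * Q ((l - 1) * z)))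
      (fun z : ℂ => Complex.exp (z * Complex.log q)) := by
  simp only []
  set e := Complex.log q with he
  have key : ∀ a b : ℂ, Complex.exp ((a + b) * e) = Complex.exp (a * e) * Complex.exp (b * e) := by
    intro a b; rw [add_mul, Complex.exp_add]
  have hneg : ∀ a : ℂ, Complex.exp ((-a) * e) = (Complex.exp (a * e))⁻¹ := by
    intro a; rw [neg_mul, Complex.exp_neg]
  have hq1 : Complex.exp (1 * e) = q := by rw [one_mul, he, Complex.exp_log hq]
  set A := Complex.exp (lam * e) with hA'
  set X := Complex.exp (x * e) with hX'
  set L := Complex.exp (lam * x * e) with hL'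
  have hA : A ≠ 0 := Complex.exp_ne_zero _
  have hX : X ≠ 0 := Complex.exp_ne_zero _
  have hL : L ≠ 0 := Complex.exp_ne_zero _
  have e2x : Complex.exp (2 * x * e) = X * X := by
    rw [show (2 : ℂ) * x = x + x from by ring, key]
  have em2x : Complex.exp (-2 * x * e) = (X * X)⁻¹ := by
    rw [show (-2 : ℂ) * x = -(x + x) from by ring, hneg, key]
  have em2 : Complex.exp ((-2 : ℂ) * e) = (q * q)⁻¹ := by
    rw [show (-2 : ℂ) = -(1 + 1) from by ring, hneg, key, hq1]
  have em1 : Complex.exp ((-1 : ℂ) * e) = q⁻¹ := by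
    rw [show (-1 : ℂ) = -(1:ℂ) from by ring, hneg, hq1]
  have e1 : Complex.exp ((lam + 1) * (x + 1) * e) = L * (A * (X * q)) := by
    rw [show (lam + 1) * (x + 1) = lam * x + (lam + (x + 1)) from by ring, key, key, key, hq1]
  have e2 : Complex.exp ((lam - 1) * (x + 1) * e) = L * (X⁻¹ * (A * q⁻¹)) := by
    rw [show (lam - 1) * (x + 1) = lam * x + (-x + (lam + -1)) from by ring, key, key, key,
      hneg, show (-1 : ℂ) * e = (-(1:ℂ)) * e from by ring, hneg, hq1]
  have e3 : Complex.exp ((lam + 1) * (x - 1) * e) = L * (A⁻¹ * (X * q⁻¹)) := by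
    rw [show (lam + 1) * (x - 1) = lam * x + (-lam + (x + -1)) from by ring, key, key, key,
      hneg, show (-1 : ℂ) * e = (-(1:ℂ)) * e from by ring, hneg, hq1]
  have e4 : Complex.exp ((lam - 1) * (x - 1) * e) = L * (A⁻¹ * (X⁻¹ * q)) := by
    rw [show (lam - 1) * (x - 1) = lam * x + (-lam + (-x + 1)) from by ring, key, key, key,
      hneg, hneg, hq1]
  have e5 : Complex.exp ((1 + lam) * e) = q * A := by rw [key, hq1]
  have e6 : Complex.exp ((-1 - lam) * e) = (q * A)⁻¹ := by
    rw [show (-1 : ℂ) - lam = -(1 + lam) from by ring, hneg, key, hq1]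
  have e7 : Complex.exp ((1 - lam) * e) = q * A⁻¹ := by
    rw [show (1 : ℂ) - lam = 1 + -lam from by ring, key, hneg, hq1]
  have e8 : Complex.exp ((lam - 1) * e) = A * q⁻¹ := by
    rw [show lam - (1:ℂ) = lam + -1 from by ring, key,
      show (-1 : ℂ) * e = (-(1:ℂ)) * e from by ring, hneg, hq1]
  have e9 : Complex.exp (-lam * e) = A⁻¹ := hneg lam
  have e10 : Complex.exp ((lam + 1) * x * e) = L * X := by
    rw [show (lam + 1) * x = lam * x + x from by ring, key]
  have e11 : Complex.exp ((lam - 1) * x * e) = L * X⁻¹ := by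
    rw [show (lam - 1) * x = lam * x + -x from by ring, key, hneg]
  rw [e2x] at hx
  have hX2 : 1 - X * X ≠ 0 := fun h => hx (by linear_combination -h)
  have hX2' : 1 - (X * X)⁻¹ ≠ 0 := by
    intro h
    apply hX2
    have := sub_eq_zero.mp h
    field_simp at this
    rw [← this]; ring
  have hqA : q * q - A * A ≠ 0 := by
    intro h
    apply hlam
    have hAq : A * A = q * q := by linear_combination -h
    rw [show 2 * lam - 2 = lam + (lam + (-1 + -1)) from by ring, key, key, key,
      show (-1 : ℂ) * e = (-(1:ℂ)) * e from by ring, hneg, hq1, ← hA']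
    field_simp [hAq]
    linear_combination hAq
  have hdenrw : q * A⁻¹ - A * q⁻¹ = (q * q - A * A) / (q * A) := by
    rw [eq_div_iff (mul_ne_zero hq hA)]
    linear_combination (q * q) * mul_inv_cancel₀ hA - (A * A) * mul_inv_cancel₀ hq
  rw [e1, e2, e3, e4, e5, e6, e7, e8, e9, e10, e11, em2, em1, e2x, em2x, hdenrw]
  clear_value A X L
  have hc1 : (1 - (q * q)⁻¹ * (X * X)) / (q⁻¹ * (1 - X * X))
      = (q * q - X * X) / (q * (1 - X * X)) := by
    rw [div_eq_div_iff (mul_ne_zero (inv_ne_zero hq) hX2) (mul_ne_zero hq hX2)]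
    field_simp
  have hc2 : (1 - (q * q)⁻¹ * (X * X)⁻¹) / (q⁻¹ * (1 - (X * X)⁻¹))
      = (q * q * (X * X) - 1) / (q * (X * X - 1)) := by
    rw [div_eq_div_iff (mul_ne_zero (inv_ne_zero hq) hX2') (mul_ne_zero hq (sub_ne_zero.mpr hx))]
    field_simp
  have hc3 : (q * A - (q * A)⁻¹) / ((q * q - A * A) / (q * A))
      = (q * q * (A * A) - 1) / (q * q - A * A) := by
    rw [div_div_eq_mul_div, div_eq_div_iff hqA hqA]
    linear_combination (A * A - q * q) * mul_inv_cancel₀ (mul_ne_zero hq hA)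
  rw [hc1, hc2, hc3]
  have hBe : (q * q * (A * A) - 1) / (q * q - A * A) * (q * q - A * A) = q * q * (A * A) - 1 :=
    div_mul_cancel₀ _ hqA
  generalize (q * q * (A * A) - 1) / (q * q - A * A) = B at hBe ⊢
  have hD : q ^ 2 * X * A ^ 4 + (-(q ^ 2 * X ^ 3 * A ^ 4) - q ^ 4 * X * A ^ 2) +
      q ^ 4 * X ^ 3 * A ^ 2 ≠ 0 := by
    have hrw : q ^ 2 * X * A ^ 4 + (-(q ^ 2 * X ^ 3 * A ^ 4) - q ^ 4 * X * A ^ 2) +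
        q ^ 4 * X ^ 3 * A ^ 2 = q ^ 2 * X * A ^ 2 * (-((q * q - A * A) * (1 - X * X))) := by ring
    rw [hrw]
    exact mul_ne_zero (mul_ne_zero (mul_ne_zero (pow_ne_zero 2 hq) hX) (pow_ne_zero 2 hA))
      (neg_ne_zero.mpr (mul_ne_zero hqA hX2))
  clear he hlam key hneg hq1 e2x em2x em2 em1 e1 e2 e3 e4 e5 e6 e7 e8 e9 e10 e11 hroot
  have hx1 : X * X - 1 ≠ 0 := sub_ne_zero.mpr hx
  field_simp [hq, hA, hX, hL, hqA, hX2, hx1]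
  have hX2p : 1 - X ^ 2 ≠ 0 := by rw [sq]; exact hX2
  have hx1p : X ^ 2 - 1 ≠ 0 := by rw [sq]; exact hx1
  rw [div_add_div _ _ hX2p hx1p, div_eq_iff (mul_ne_zero hX2p hx1p)]
  linear_combination ((X ^ 2 - 1) * X ^ 2 * (1 - q ^ 2)) * hBe
end

section
/- Let q be a complex number with 0 < |q| < 1 which is not a root of unity, m a positive integer, and let w(x) = Δ(x)Δ(-x) with Δ(x) = ∏_{j=1}^{m}(q^{x-j} - q^{j-x}). Let y ∈ ℂ satisfy q^{2y} = 1, and fix j ∈ {1,…,m}. Suppose f is holomorphic in a neighborhood of the points y+j and y-j and satisfies f(y + j) = f(y - j). Assume moreover that y±j are simple zeros of w. Then Res_{x = y+j} (f(x)/w(x)) + Res_{x = y-j} (f(x)/w(x)) = 0. -/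
/-- Rank-one residue cancellation: let `w(x) = Δ(x)Δ(-x)` with
`Δ(x) = ∏_{j=1}^m (q^{x-j} - q^{j-x})` (`q^z = exp(z·log q)`, `0 < |q| < 1`, `q` not
a root of unity).  If `q^{2y} = 1`, `1 ≤ j ≤ m`, `f` is holomorphic near `y ± j` with
`f(y+j) = f(y-j)`, and `y ± j` are simple zeros of `w`, then the residues of `f/w`
at `y + j` and `y - j` (namely `f(y±j)/w'(y±j)`) sum to zero. -/
theorem rank_one_residue_cancellation (q : ℂ) (hq0 : 0 < ‖q‖)
    (hq1 : ‖q‖ < 1) (hroot : ∀ n : ℕ, 0 < n → q ^ n ≠ 1)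
    (m : ℕ) (hm : 0 < m) (y : ℂ)
    (hy : Complex.exp (2 * y * Complex.log q) = 1)
    (j : ℕ) (hj : j ∈ Finset.Icc 1 m) (f : ℂ → ℂ)
    (hf₁ : AnalyticAt ℂ f (y + j)) (hf₂ : AnalyticAt ℂ f (y - j))
    (hfeq : f (y + j) = f (y - j)) :
    (fun w : ℂ → ℂ =>
      w (y + j) = 0 → w (y - j) = 0 →
      deriv w (y + j) ≠ 0 → deriv w (y - j) ≠ 0 →
      f (y + j) / deriv w (y + j) + f (y - j) / deriv w (y - j) = 0)
      (fun x =>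
        (∏ i ∈ Finset.Icc 1 m,
          (Complex.exp ((x - (i : ℂ)) * Complex.log q) -
            Complex.exp (((i : ℂ) - x) * Complex.log q))) *
        (∏ i ∈ Finset.Icc 1 m,
          (Complex.exp ((-x - (i : ℂ)) * Complex.log q) -
            Complex.exp (((i : ℂ) + x) * Complex.log q)))) := by
  set lq := Complex.log q with hlq
  set w : ℂ → ℂ := fun x =>
        (∏ i ∈ Finset.Icc 1 m,
          (Complex.exp ((x - (i : ℂ)) * lq) -
            Complex.exp (((i : ℂ) - x) * lq))) *
        (∏ i ∈ Finset.Icc 1 m,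
          (Complex.exp ((-x - (i : ℂ)) * lq) -
            Complex.exp (((i : ℂ) + x) * lq))) with hw
  intro h1 h2 h3 h4
  -- symmetry: w (2y - x) = w x
  have hsym : ∀ x : ℂ, w (2 * y - x) = w x := by
    intro x
    simp only [hw]
    rw [mul_comm]
    congr 1
    · refine Finset.prod_congr rfl fun i _ => ?_
      rw [show (-(2 * y - x) - (i : ℂ)) * lq = (x - i) * lq + (-(2 * y * lq)) by ring,
        show ((i : ℂ) + (2 * y - x)) * lq = (i - x) * lq + 2 * y * lq by ring,
        Complex.exp_add, Complex.exp_add, hy, Complex.exp_neg, hy]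
      simp
    · refine Finset.prod_congr rfl fun i _ => ?_
      rw [show (2 * y - x - (i : ℂ)) * lq = (-x - i) * lq + 2 * y * lq by ring,
        show ((i : ℂ) - (2 * y - x)) * lq = (i + x) * lq + (-(2 * y * lq)) by ring,
        Complex.exp_add, Complex.exp_add, hy, Complex.exp_neg, hy]
      simp
  have hdiff : Differentiable ℂ w := by
    apply Differentiable.mul <;>
    · apply Differentiable.fun_finset_prod
      intro i _
      apply Differentiable.sub <;>
      · apply Complex.differentiable_exp.comp
        apply Differentiable.mul _ (differentiable_const _)
        fun_prop
  -- deriv w (y+j) = - deriv w (y-j)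
  have hkey : deriv w (y + j) = - deriv w (y - j) := by
    have hD : HasDerivAt w (deriv w (y - j)) (y - j) :=
      (hdiff (y - j)).hasDerivAt
    have hinner : HasDerivAt (fun x : ℂ => 2 * y - x) (-1) (y + j) := by
      simpa using (hasDerivAt_id (y + j)).const_sub (2 * y)
    have hD' : HasDerivAt w (deriv w (y - j)) (2 * y - (y + j)) := by
      rw [show (2 * y - (y + (j:ℂ))) = y - j by ring]; exact hD
    have hcomp : HasDerivAt (fun x => w (2 * y - x)) (deriv w (y - j) * (-1)) (y + j) :=
      hD'.comp (y + j) hinner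
    have heq : (fun x => w (2 * y - x)) = w := funext hsym
    rw [heq] at hcomp
    rw [hcomp.deriv]; ring
  rw [hkey, hfeq, div_neg]
  ring
end
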